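/- Let c₁ < c₂ < c₃ and y₁ > y₂ > y₃ be real numbers such that (y₂ − y₁)/(c₂ − c₁) ≠ (y₃ − y₁)/(c₃ − c₁). Then there exist unique real a, b, k with a ≠ 0, k ≠ 0, such that a e^{k c_i} + b = y_i for i = 1, 2, 3. -/

import Mathlib

open Real Filter Set Topology

open Real Filter Set Topology

lemma exists_k (u v R : ℝ) (hu : 0 < u) (huv : u < v) (hR : 1 < R) (hR' : R ≠ v / u) :
    ∃ k : ℝ, k ≠ 0 ∧ Real.exp (k * v) - 1 = R * (Real.exp (k * u) - 1) := by
  set g : ℝ → ℝ := fun k => (Real.exp (k * v) - 1) / (Real.exp (k * u) - 1) with hgdef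
  have hv : 0 < v := hu.trans huv
  -- limit of g at 0 within punctured nbhd
  have slopeu : Tendsto (fun k : ℝ => (Real.exp (k * u) - 1) / k) (𝓝[≠] 0) (𝓝 u) := by
    have hd : HasDerivAt (fun k : ℝ => Real.exp (k * u)) u 0 := by
      simpa using (hasDerivAt_mul_const u (x := 0)).exp
    have := hasDerivAt_iff_tendsto_slope.1 hd
    refine this.congr (fun k => ?_)
    simp [slope, div_eq_inv_mul]
  have slopev : Tendsto (fun k : ℝ => (Real.exp (k * v) - 1) / k) (𝓝[≠] 0) (𝓝 v) := by
    have hd : HasDerivAt (fun k : ℝ => Real.exp (k * v)) v 0 := by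
      simpa using (hasDerivAt_mul_const v (x := 0)).exp
    have := hasDerivAt_iff_tendsto_slope.1 hd
    refine this.congr (fun k => ?_)
    simp [slope, div_eq_inv_mul]
  have hglim : Tendsto g (𝓝[≠] 0) (𝓝 (v / u)) := by
    have h := slopev.div slopeu hu.ne'
    refine h.congr' ?_
    filter_upwards [self_mem_nhdsWithin] with k (hk : k ≠ 0)
    rw [hgdef]
    simp only [Pi.div_apply]; rw [div_div_div_cancel_right₀ hk]
  -- denominator facts
  have hden_pos : ∀ k : ℝ, 0 < k → 0 < Real.exp (k * u) - 1 := by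
    intro k hk
    have : (1:ℝ) < Real.exp (k * u) := by
      rw [show (1:ℝ) = Real.exp 0 by simp]
      exact Real.exp_lt_exp.2 (by positivity)
    linarith
  have hden_neg : ∀ k : ℝ, k < 0 → Real.exp (k * u) - 1 < 0 := by
    intro k hk
    have h2 : Real.exp (k * u) < Real.exp 0 :=
      Real.exp_lt_exp.2 (by nlinarith)
    rw [Real.exp_zero] at h2; linarith
  have key : ∃ k : ℝ, k ≠ 0 ∧ g k = R := by
    rcases lt_or_gt_of_ne hR' with hlt | hgt
    · -- R < v/u : use negative k
      -- endpoint k₁ < 0 with g k₁ < R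
      set k₁ : ℝ := Real.log (1 - 1/R) / u with hk₁def
      have h01 : 0 < 1 - 1/R := by
        have : 1/R < 1 := by rw [div_lt_one (by linarith)]; linarith
        linarith
      have h11 : 1 - 1/R < 1 := by
        have : 0 < 1/R := by positivity
        linarith
      have hk₁neg : k₁ < 0 := by
        have : Real.log (1 - 1/R) < 0 := Real.log_neg h01 h11
        exact div_neg_of_neg_of_pos this hu
      have hexpk₁ : Real.exp (k₁ * u) = 1 - 1/R := by
        rw [hk₁def, div_mul_cancel₀ _ hu.ne', Real.exp_log h01]
      have hgk₁ : g k₁ < R := by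
        have hd : Real.exp (k₁ * u) - 1 = -(1/R) := by rw [hexpk₁]; ring
        have hR0 : (0:ℝ) < R := by linarith
        have hrw : g k₁ = (1 - Real.exp (k₁ * v)) * R := by
          rw [hgdef]; simp only; rw [hd]; field_simp; ring
        rw [hrw]
        nlinarith [Real.exp_pos (k₁ * v)]
      have hglim' : Tendsto g (𝓝[<] (0:ℝ)) (𝓝 (v/u)) :=
        hglim.mono_left (nhdsWithin_mono _ (fun x hx => ne_of_lt hx))
      have hev : ∀ᶠ k in 𝓝[<] (0:ℝ), R < g k ∧ k ∈ Ioo k₁ 0 :=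
        (hglim'.eventually_const_lt hlt).and
          (Ioo_mem_nhdsLT_of_mem ⟨hk₁neg, le_refl 0⟩)
      obtain ⟨k₀, hRk₀, hk₀mem⟩ := hev.exists
      have hcont : ContinuousOn g (Icc k₁ k₀) := by
        apply ContinuousOn.div
        · exact ((Real.continuous_exp.comp (continuous_id.mul continuous_const)).sub
            continuous_const).continuousOn
        · exact ((Real.continuous_exp.comp (continuous_id.mul continuous_const)).sub
            continuous_const).continuousOn
        · intro x hx
          exact (hden_neg x (lt_of_le_of_lt hx.2 hk₀mem.2)).ne
      obtain ⟨k, hkmem, hgk⟩ := intermediate_value_Icc (le_of_lt hk₀mem.1) hcont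
        ⟨le_of_lt hgk₁, le_of_lt hRk₀⟩
      exact ⟨k, (lt_of_le_of_lt hkmem.2 hk₀mem.2).ne, hgk⟩
    · -- v/u < R : use positive k
      set k₁ : ℝ := Real.log (R + 1) / (v - u) with hk₁def
      have hk₁pos : 0 < k₁ := div_pos (Real.log_pos (by linarith)) (by linarith)
      have hexpk₁ : Real.exp (k₁ * (v - u)) = R + 1 := by
        rw [hk₁def, div_mul_cancel₀ _ (by linarith : v - u ≠ 0), Real.exp_log (by linarith)]
      have hgk₁ : R < g k₁ := by
        have hdp := hden_pos k₁ hk₁pos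
        have hsplit : Real.exp (k₁ * v) = Real.exp (k₁ * u) * (R + 1) := by
          rw [← hexpk₁, ← Real.exp_add]; ring_nf
        rw [hgdef]; simp only; rw [lt_div_iff₀ hdp]
        nlinarith [Real.exp_pos (k₁ * u)]
      have hglim' : Tendsto g (𝓝[>] (0:ℝ)) (𝓝 (v/u)) :=
        hglim.mono_left (nhdsWithin_mono _ (fun x hx => ne_of_gt hx))
      have hev : ∀ᶠ k in 𝓝[>] (0:ℝ), g k < R ∧ k ∈ Ioo 0 k₁ :=
        (hglim'.eventually_lt_const hgt).and
          (Ioo_mem_nhdsGT_of_mem ⟨le_refl 0, hk₁pos⟩)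
      obtain ⟨k₀, hRk₀, hk₀mem⟩ := hev.exists
      have hcont : ContinuousOn g (Icc k₀ k₁) := by
        apply ContinuousOn.div
        · exact ((Real.continuous_exp.comp (continuous_id.mul continuous_const)).sub
            continuous_const).continuousOn
        · exact ((Real.continuous_exp.comp (continuous_id.mul continuous_const)).sub
            continuous_const).continuousOn
        · intro x hx
          exact (hden_pos x (lt_of_lt_of_le hk₀mem.1 hx.1)).ne'
      obtain ⟨k, hkmem, hgk⟩ := intermediate_value_Icc (le_of_lt hk₀mem.2) hcont
        ⟨le_of_lt hRk₀, le_of_lt hgk₁⟩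
      exact ⟨k, (lt_of_lt_of_le hk₀mem.1 hkmem.1).ne', hgk⟩
  obtain ⟨k, hk0, hgk⟩ := key
  refine ⟨k, hk0, ?_⟩
  have hdnz : Real.exp (k * u) - 1 ≠ 0 := by
    rcases hk0.lt_or_gt with h | h
    · exact (hden_neg k h).ne
    · exact (hden_pos k h).ne'
  rw [hgdef] at hgk
  field_simp at hgk
  linarith [hgk]

lemma uniq_aux (c₁ c₂ c₃ y₁ y₂ y₃ a b k a' b' k' : ℝ)
    (hc12 : c₁ < c₂) (hc23 : c₂ < c₃)
    (ha : a ≠ 0) (hk : k ≠ 0) (ha' : a' ≠ 0) (hk' : k' ≠ 0)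
    (e1 : a * Real.exp (k * c₁) + b = y₁)
    (e2 : a * Real.exp (k * c₂) + b = y₂)
    (e3 : a * Real.exp (k * c₃) + b = y₃)
    (f1 : a' * Real.exp (k' * c₁) + b' = y₁)
    (f2 : a' * Real.exp (k' * c₂) + b' = y₂)
    (f3 : a' * Real.exp (k' * c₃) + b' = y₃) :
    a = a' ∧ b = b' ∧ k = k' := by
  have hkk : k = k' := by
    by_contra hkk
    set F : ℝ → ℝ := fun x => a * Real.exp (k * x) - a' * Real.exp (k' * x) + (b - b')
      with hFdef
    set G : ℝ → ℝ := fun x => a * (Real.exp (k * x) * k) - a' * (Real.exp (k' * x) * k')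
      with hGdef
    have hF : ∀ x : ℝ, HasDerivAt F (G x) x := by
      intro x
      have h1 : HasDerivAt (fun x : ℝ => Real.exp (k * x)) (Real.exp (k * x) * k) x := by
        simpa using ((hasDerivAt_id x).const_mul k).exp
      have h2 : HasDerivAt (fun x : ℝ => Real.exp (k' * x)) (Real.exp (k' * x) * k') x := by
        simpa using ((hasDerivAt_id x).const_mul k').exp
      exact ((h1.const_mul a).sub (h2.const_mul a')).add_const _
    have hcont : ∀ s : Set ℝ, ContinuousOn F s :=
      fun s => fun x _ => (hF x).continuousAt.continuousWithinAt
    have hF12 : F c₁ = F c₂ := by simp only [hFdef]; nlinarith [e1, e2, f1, f2]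
    have hF23 : F c₂ = F c₃ := by simp only [hFdef]; nlinarith [e2, e3, f2, f3]
    obtain ⟨d₁, hd₁, hG₁⟩ := exists_hasDerivAt_eq_zero hc12 (hcont _) hF12
      (fun x _ => hF x)
    obtain ⟨d₂, hd₂, hG₂⟩ := exists_hasDerivAt_eq_zero hc23 (hcont _) hF23
      (fun x _ => hF x)
    have hd₁₂ : d₁ < d₂ := hd₁.2.trans hd₂.1
    set H : ℝ → ℝ := fun x => a * k - a' * k' * Real.exp ((k' - k) * x) with hHdef
    have hH0 : ∀ d : ℝ, G d = 0 → H d = 0 := by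
      intro d hGd
      have h2 : Real.exp ((k' - k) * d) * Real.exp (k * d) = Real.exp (k' * d) := by
        rw [← Real.exp_add]; ring_nf
      have hprod : (a * k - a' * k' * Real.exp ((k' - k) * d)) * Real.exp (k * d) = 0 := by
        simp only [hGdef] at hGd
        linear_combination hGd - a' * k' * h2
      rcases mul_eq_zero.1 hprod with h | h
      · simpa [hHdef] using h
      · exact absurd h (Real.exp_ne_zero _)
    have hH1 : H d₁ = 0 := hH0 d₁ hG₁
    have hH2 : H d₂ = 0 := hH0 d₂ hG₂
    set H' : ℝ → ℝ := fun x => -(a' * k' * (Real.exp ((k' - k) * x) * (k' - k))) with hH'def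
    have hHd : ∀ x : ℝ, HasDerivAt H (H' x) x := by
      intro x
      have h1 : HasDerivAt (fun x : ℝ => Real.exp ((k' - k) * x))
          (Real.exp ((k' - k) * x) * (k' - k)) x := by
        simpa using ((hasDerivAt_id x).const_mul (k' - k)).exp
      exact (h1.const_mul (a' * k')).const_sub _
    obtain ⟨e, _, hHe⟩ := exists_hasDerivAt_eq_zero hd₁₂
      (fun x _ => (hHd x).continuousAt.continuousWithinAt) (hH1.trans hH2.symm)
      (fun x _ => hHd x)
    simp only [hH'def, neg_eq_zero, mul_eq_zero] at hHe
    rcases hHe with ((h | h) | (h | h))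
    · exact ha' h
    · exact hk' h
    · exact Real.exp_ne_zero _ h
    · exact hkk (by linarith)
  subst hkk
  have hexpne : Real.exp (k * c₁) ≠ Real.exp (k * c₂) := by
    intro h
    have h2 : k * c₁ = k * c₂ := Real.exp_injective h
    exact (ne_of_lt hc12) (mul_left_cancel₀ hk h2)
  have h1 : (a - a') * Real.exp (k * c₁) = b' - b := by linear_combination e1 - f1
  have h2 : (a - a') * Real.exp (k * c₂) = b' - b := by linear_combination e2 - f2
  have h3 : (a - a') * (Real.exp (k * c₁) - Real.exp (k * c₂)) = 0 := by
    linear_combination h1 - h2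
  have haa : a = a' := by
    rcases mul_eq_zero.1 h3 with h | h
    · linarith [sub_eq_zero.1 h]
    · exact absurd (sub_eq_zero.1 h) hexpne
  refine ⟨haa, ?_, rfl⟩
  subst haa
  linarith [e1, f1]


theorem stmt_7 (c₁ c₂ c₃ y₁ y₂ y₃ : ℝ)
    (hc12 : c₁ < c₂) (hc23 : c₂ < c₃) (hy12 : y₁ > y₂) (hy23 : y₂ > y₃)
    (hslope : (y₂ - y₁) / (c₂ - c₁) ≠ (y₃ - y₁) / (c₃ - c₁)) :
    ∃! p : ℝ × ℝ × ℝ, p.1 ≠ 0 ∧ p.2.2 ≠ 0 ∧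
      p.1 * Real.exp (p.2.2 * c₁) + p.2.1 = y₁ ∧
      p.1 * Real.exp (p.2.2 * c₂) + p.2.1 = y₂ ∧
      p.1 * Real.exp (p.2.2 * c₃) + p.2.1 = y₃ := by
  have hu : 0 < c₂ - c₁ := by linarith
  have hv : 0 < c₃ - c₁ := by linarith
  have huv : c₂ - c₁ < c₃ - c₁ := by linarith
  have hy2ne : y₂ - y₁ ≠ 0 := by linarith
  have hR : 1 < (y₃ - y₁) / (y₂ - y₁) := by
    rw [lt_div_iff_of_neg (by linarith : y₂ - y₁ < 0)]; linarith
  have hR' : (y₃ - y₁) / (y₂ - y₁) ≠ (c₃ - c₁) / (c₂ - c₁) := by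
    intro h
    rw [div_eq_div_iff (by linarith : y₂ - y₁ ≠ 0) hu.ne'] at h
    apply hslope
    rw [div_eq_div_iff hu.ne' hv.ne']
    linarith [h]
  obtain ⟨k, hk0, hkey⟩ := exists_k (c₂ - c₁) (c₃ - c₁) ((y₃ - y₁) / (y₂ - y₁)) hu huv hR hR'
  have hkey2 : (y₂ - y₁) * (Real.exp (k * (c₃ - c₁)) - 1)
      = (y₃ - y₁) * (Real.exp (k * (c₂ - c₁)) - 1) := by
    field_simp at hkey
    linarith [hkey]
  have hEne : Real.exp (k * c₂) - Real.exp (k * c₁) ≠ 0 := by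
    rw [sub_ne_zero]
    intro h
    exact hc12.ne' (mul_left_cancel₀ hk0 (Real.exp_injective h))
  set a : ℝ := (y₂ - y₁) / (Real.exp (k * c₂) - Real.exp (k * c₁)) with hadef
  set b : ℝ := y₁ - a * Real.exp (k * c₁) with hbdef
  have ha0 : a ≠ 0 := div_ne_zero hy2ne hEne
  have e1 : a * Real.exp (k * c₁) + b = y₁ := by rw [hbdef]; ring
  have e2 : a * Real.exp (k * c₂) + b = y₂ := by
    rw [hbdef, hadef]; field_simp; ring
  have h2 : Real.exp (k * c₂) = Real.exp (k * c₁) * Real.exp (k * (c₂ - c₁)) := by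
    rw [← Real.exp_add]; ring_nf
  have h3 : Real.exp (k * c₃) = Real.exp (k * c₁) * Real.exp (k * (c₃ - c₁)) := by
    rw [← Real.exp_add]; ring_nf
  have e3 : a * Real.exp (k * c₃) + b = y₃ := by
    rw [hbdef, hadef]
    field_simp
    linear_combination Real.exp (k * c₁) * hkey2
      + (y₂ - y₁) * h3 - (y₃ - y₁) * h2
  refine ⟨⟨a, b, k⟩, ⟨ha0, hk0, e1, e2, e3⟩, ?_⟩
  rintro ⟨a', b', k'⟩ ⟨ha', hk', f1, f2, f3⟩
  obtain ⟨g1, g2, g3⟩ := uniq_aux c₁ c₂ c₃ y₁ y₂ y₃ a' b' k' a b k hc12 hc23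
    ha' hk' ha0 hk0 f1 f2 f3 e1 e2 e3
  simp [Prod.ext_iff, g1, g2, g3]
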